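/- For every integer n ≥ 1, every IR(G_n)-set contains exactly one of the vertices u and v, and exactly two vertices from each set S_i, i = 1, ..., n. -/

import Mathlib

open SimpleGraph

section IRDefs

variable {V : Type*}

/-- `w` is a `D`-private neighbour of `v`: `w` is dominated by `v` but by no other
vertex of `D`. -/
def IsPrivateNbr (G : SimpleGraph V) (D : Set V) (v w : V) : Prop :=
  (w = v ∨ G.Adj v w) ∧ ∀ u ∈ D, u ≠ v → ¬(w = u ∨ G.Adj u w)

/-- The set `PN(v, D)` of `D`-private neighbours of `v`. -/
def PN (G : SimpleGraph V) (v : V) (D : Set V) : Set V := {w | IsPrivateNbr G D v w}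

/-- The set `EPN(v, D) = PN(v, D) − D` of external `D`-private neighbours of `v`. -/
def EPN (G : SimpleGraph V) (v : V) (D : Set V) : Set V := PN G v D \ D

/-- A set `D` is irredundant if every vertex of `D` has a `D`-private neighbour. -/
def Irredundant (G : SimpleGraph V) (D : Set V) : Prop := ∀ v ∈ D, (PN G v D).Nonempty

/-- The upper irredundance number `IR(G)`. -/
noncomputable def IRnum (G : SimpleGraph V) : ℕ :=
  sSup {n | ∃ D : Set V, Irredundant G D ∧ D.ncard = n}

/-- An `IR(G)`-set: an irredundant set of maximum cardinality `IR(G)`. -/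
def IsIRSet (G : SimpleGraph V) (D : Set V) : Prop :=
  Irredundant G D ∧ D.ncard = IRnum G

/-- The `IR`-graph of `G`: vertices are the `IR(G)`-sets, and `D` is adjacent to `D'`
iff `D' = (D − {u}) ∪ {v}` for some `u ∈ D` and `v ∈ D' − {u}` with `uv ∈ E(G)`. -/
def IRGraph (G : SimpleGraph V) [Fintype V] :
    SimpleGraph {D : Set V // IsIRSet G D} where
  Adj D D' := ∃ a b, a ∈ D.1 ∧ b ∈ D'.1 ∧ b ≠ a ∧ G.Adj a b ∧ D'.1 = (D.1 \ {a}) ∪ {b}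
  symm := by
    constructor
    rintro ⟨D, hD⟩ ⟨D', hD'⟩ ⟨a, b, ha, hb, hba, hadj, heq⟩
    dsimp only at ha hb heq ⊢
    have hbD : b ∉ D := by
      intro hbD
      have h1 : D' = D \ {a} := by
        rw [heq]
        ext x
        simp only [Set.mem_union, Set.mem_diff, Set.mem_singleton_iff]
        constructor
        · rintro (h | rfl)
          · exact h
          · exact ⟨hbD, hba⟩
        · exact Or.inl
      have h2 : D'.ncard = D.ncard - 1 := by
        rw [h1, Set.ncard_diff_singleton_of_mem ha]
      have h3 : D.ncard = D'.ncard := by rw [hD.2, hD'.2]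
      have h4 : 0 < D.ncard := (Set.ncard_pos (Set.toFinite D)).2 ⟨a, ha⟩
      omega
    refine ⟨b, a, hb, ha, fun h => hba h.symm, hadj.symm, ?_⟩
    rw [heq]
    ext x
    simp only [Set.mem_union, Set.mem_diff, Set.mem_singleton_iff]
    constructor
    · intro hx
      by_cases hxa : x = a
      · exact Or.inr hxa
      · have hxb : x ≠ b := fun h => hbD (h ▸ hx)
        exact Or.inl ⟨Or.inl ⟨hx, hxa⟩, hxb⟩
    · rintro (⟨(⟨hx, _⟩ | rfl), hxb⟩ | rfl)
      · exact hx
      · exact absurd rfl hxb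
      · exact ha
  loopless := by
    constructor
    rintro ⟨D, hD⟩ ⟨a, b, ha, hb, hba, hadj, heq⟩
    dsimp only at ha hb heq
    have h2 : a ∈ (D \ {a}) ∪ {b} := heq ▸ ha
    rcases h2 with h | h
    · exact h.2 rfl
    · exact hba h.symm

end IRDefs

/-- The vertices of the graph `Gₙ`. -/
inductive GVert (n : ℕ) : Type
  | u : GVert n
  | v : GVert n
  | a : Fin n → GVert n
  | b : Fin n → GVert n
  | c : Fin n → GVert n
  | d : Fin n → GVert n
  deriving DecidableEq, Fintype

/-- The graph `Gₙ`: edges `uv`, `u aᵢ` for all `i`, `v bᵢ` for all `i`,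
`aᵢ bⱼ` for all `i ≠ j`, and, for each `i`, the 4-cycle `(aᵢ, cᵢ, bᵢ, dᵢ, aᵢ)`. -/
def Gn (n : ℕ) : SimpleGraph (GVert n) :=
  SimpleGraph.fromRel (fun x y =>
    (x = .u ∧ y = .v) ∨
    (∃ i, x = .u ∧ y = .a i) ∨
    (∃ i, x = .v ∧ y = .b i) ∨
    (∃ i j, i ≠ j ∧ x = .a i ∧ y = .b j) ∨
    (∃ i, x = .a i ∧ y = .c i) ∨
    (∃ i, x = .c i ∧ y = .b i) ∨
    (∃ i, x = .b i ∧ y = .d i) ∨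
    (∃ i, x = .d i ∧ y = .a i))

/-- `Sᵢ = {aᵢ, bᵢ, cᵢ, dᵢ}`. -/
def Sset (n : ℕ) (i : Fin n) : Set (GVert n) := {.a i, .b i, .c i, .d i}


section Aux
open GVert
variable {n : ℕ}

lemma adj_uv : (Gn n).Adj .u .v := by simp [Gn]
lemma adj_ua (i : Fin n) : (Gn n).Adj .u (.a i) := by simp [Gn]
lemma adj_vb (i : Fin n) : (Gn n).Adj .v (.b i) := by simp [Gn]
lemma adj_ab {i j : Fin n} (h : i ≠ j) : (Gn n).Adj (.a i) (.b j) := by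
  simp [Gn]; tauto
lemma adj_ac (i : Fin n) : (Gn n).Adj (.a i) (.c i) := by simp [Gn]
lemma adj_cb (i : Fin n) : (Gn n).Adj (.c i) (.b i) := by simp [Gn]
lemma adj_bd (i : Fin n) : (Gn n).Adj (.b i) (.d i) := by simp [Gn]
lemma adj_da (i : Fin n) : (Gn n).Adj (.d i) (.a i) := by simp [Gn]

lemma dom_c {i : Fin n} {z : GVert n} (h : z = .c i ∨ (Gn n).Adj z (.c i)) :
    z = .c i ∨ z = .a i ∨ z = .b i := by
  cases z <;> simp_all [Gn]

lemma dom_d {i : Fin n} {z : GVert n} (h : z = .d i ∨ (Gn n).Adj z (.d i)) :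
    z = .d i ∨ z = .a i ∨ z = .b i := by
  cases z <;> simp_all [Gn]

lemma dom_u {z : GVert n} (h : z = .u ∨ (Gn n).Adj z .u) :
    z = .u ∨ z = .v ∨ ∃ i, z = .a i := by
  cases z <;> simp_all [Gn]

lemma dom_v {z : GVert n} (h : z = .v ∨ (Gn n).Adj z .v) :
    z = .v ∨ z = .u ∨ ∃ i, z = .b i := by
  cases z <;> simp_all [Gn]

lemma dom_a {i : Fin n} {z : GVert n} (h : z = .a i ∨ (Gn n).Adj z (.a i)) :
    z = .a i ∨ z = .u ∨ z = .c i ∨ z = .d i ∨ ∃ j, j ≠ i ∧ z = .b j := by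
  cases z <;> simp_all [Gn] <;> tauto

lemma dom_b {i : Fin n} {z : GVert n} (h : z = .b i ∨ (Gn n).Adj z (.b i)) :
    z = .b i ∨ z = .v ∨ z = .c i ∨ z = .d i ∨ ∃ j, j ≠ i ∧ z = .a j := by
  cases z <;> simp_all [Gn] <;> tauto

/-- classification map -/
def cls : GVert n → Option (Fin n)
  | .u => none | .v => none
  | .a i => some i | .b i => some i | .c i => some i | .d i => some i

lemma card_decomp (Z : Set (GVert n)) :
    Z.ncard = (Z ∩ {.u, .v}).ncard + ∑ i : Fin n, (Z ∩ Sset n i).ncard := by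
  classical
  have hfin := Z.toFinite
  set F : Finset (GVert n) := hfin.toFinset with hF
  have hmem : ∀ x, x ∈ F ↔ x ∈ Z := fun x => hfin.mem_toFinset
  have hcard : Z.ncard = F.card := Set.ncard_eq_toFinset_card Z hfin
  have hsum : F.card = ∑ o : Option (Fin n), (F.filter (fun x => cls x = o)).card :=
    Finset.card_eq_sum_card_fiberwise (fun x _ => Finset.mem_univ (cls x))
  have h1 : (Z ∩ {.u, .v}).ncard = (F.filter (fun x => cls x = none)).card := by
    rw [← Set.ncard_coe_finset]
    congr 1
    ext x
    cases x <;> simp [F, cls, Set.mem_inter_iff]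
  have h2 : ∀ i : Fin n, (Z ∩ Sset n i).ncard = (F.filter (fun x => cls x = some i)).card := by
    intro i
    rw [← Set.ncard_coe_finset]
    congr 1
    ext x
    cases x <;> simp [hmem, cls, Sset, Set.mem_inter_iff, and_comm, eq_comm]
  rw [hcard, hsum, Fintype.sum_option, h1]
  congr 1
  exact Finset.sum_congr rfl fun i _ => (h2 i).symm ▸ rfl

lemma ncard_inter_uv_le (Z : Set (GVert n)) : (Z ∩ {.u, .v}).ncard ≤ 2 := by
  calc (Z ∩ {.u, .v}).ncard ≤ ({.u, .v} : Set (GVert n)).ncard :=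
        Set.ncard_le_ncard Set.inter_subset_right (Set.toFinite _)
    _ ≤ 2 := (Set.ncard_insert_le _ _).trans (by simp)

variable {Z : Set (GVert n)}

/-- If `cᵢ ∈ Z` together with two of `aᵢ, bᵢ, dᵢ`, then `Z` is not irredundant. -/
lemma lemC (hirr : Irredundant (Gn n) Z) {i : Fin n} (hc : GVert.c i ∈ Z)
    (h : (GVert.a i ∈ Z ∧ GVert.b i ∈ Z) ∨ (GVert.a i ∈ Z ∧ GVert.d i ∈ Z) ∨
         (GVert.b i ∈ Z ∧ GVert.d i ∈ Z)) : False := by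
  obtain ⟨w, hdom, hpriv⟩ := hirr _ hc
  rcases dom_c (Or.imp_right SimpleGraph.Adj.symm hdom) with rfl | rfl | rfl
  · rcases h with ⟨ha, _⟩ | ⟨ha, _⟩ | ⟨hb, _⟩
    · exact hpriv _ ha (by simp) (Or.inr (adj_ac i))
    · exact hpriv _ ha (by simp) (Or.inr (adj_ac i))
    · exact hpriv _ hb (by simp) (Or.inr (adj_cb i).symm)
  · rcases h with ⟨ha, _⟩ | ⟨ha, _⟩ | ⟨_, hd⟩
    · exact hpriv _ ha (by simp) (Or.inl rfl)
    · exact hpriv _ ha (by simp) (Or.inl rfl)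
    · exact hpriv _ hd (by simp) (Or.inr (adj_da i))
  · rcases h with ⟨_, hb⟩ | ⟨_, hd⟩ | ⟨hb, _⟩
    · exact hpriv _ hb (by simp) (Or.inl rfl)
    · exact hpriv _ hd (by simp) (Or.inr (adj_bd i).symm)
    · exact hpriv _ hb (by simp) (Or.inl rfl)

/-- If `dᵢ ∈ Z` together with two of `aᵢ, bᵢ, cᵢ`, then `Z` is not irredundant. -/
lemma lemD (hirr : Irredundant (Gn n) Z) {i : Fin n} (hd : GVert.d i ∈ Z)
    (h : (GVert.a i ∈ Z ∧ GVert.b i ∈ Z) ∨ (GVert.a i ∈ Z ∧ GVert.c i ∈ Z) ∨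
         (GVert.b i ∈ Z ∧ GVert.c i ∈ Z)) : False := by
  obtain ⟨w, hdom, hpriv⟩ := hirr _ hd
  rcases dom_d (Or.imp_right SimpleGraph.Adj.symm hdom) with rfl | rfl | rfl
  · rcases h with ⟨ha, _⟩ | ⟨ha, _⟩ | ⟨hb, _⟩
    · exact hpriv _ ha (by simp) (Or.inr (adj_da i).symm)
    · exact hpriv _ ha (by simp) (Or.inr (adj_da i).symm)
    · exact hpriv _ hb (by simp) (Or.inr (adj_bd i))
  · rcases h with ⟨ha, _⟩ | ⟨ha, _⟩ | ⟨_, hc⟩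
    · exact hpriv _ ha (by simp) (Or.inl rfl)
    · exact hpriv _ ha (by simp) (Or.inl rfl)
    · exact hpriv _ hc (by simp) (Or.inr (adj_ac i).symm)
  · rcases h with ⟨_, hb⟩ | ⟨_, hc⟩ | ⟨hb, _⟩
    · exact hpriv _ hb (by simp) (Or.inl rfl)
    · exact hpriv _ hc (by simp) (Or.inr (adj_cb i))
    · exact hpriv _ hb (by simp) (Or.inl rfl)

lemma three_of_four {T : Set (GVert n)} {i : Fin n} (hT : T ⊆ Sset n i)
    (h : 3 ≤ T.ncard) :
    (GVert.a i ∈ T ∧ GVert.b i ∈ T ∧ GVert.c i ∈ T) ∨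
    (GVert.a i ∈ T ∧ GVert.b i ∈ T ∧ GVert.d i ∈ T) ∨
    (GVert.a i ∈ T ∧ GVert.c i ∈ T ∧ GVert.d i ∈ T) ∨
    (GVert.b i ∈ T ∧ GVert.c i ∈ T ∧ GVert.d i ∈ T) := by
  classical
  have hfin := T.toFinite
  rw [Set.ncard_eq_toFinset_card T hfin] at h
  obtain ⟨x, y, z, hx, hy, hz, hxy, hxz, hyz⟩ := Finset.two_lt_card_iff.mp h
  rw [hfin.mem_toFinset] at hx hy hz
  have hx' := hT hx
  have hy' := hT hy
  have hz' := hT hz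
  simp only [Sset, Set.mem_insert_iff, Set.mem_singleton_iff] at hx' hy' hz'
  rcases hx' with rfl | rfl | rfl | rfl <;> rcases hy' with rfl | rfl | rfl | rfl <;>
    rcases hz' with rfl | rfl | rfl | rfl <;> simp_all <;> tauto

lemma irred_S_le_two (hirr : Irredundant (Gn n) Z) (i : Fin n) :
    (Z ∩ Sset n i).ncard ≤ 2 := by
  by_contra h
  push_neg at h
  rcases three_of_four (Set.inter_subset_right (s := Z)) h with
    ⟨ha, hb, hc⟩ | ⟨ha, hb, hd⟩ | ⟨ha, hc, hd⟩ | ⟨hb, hc, hd⟩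
  · exact lemC hirr hc.1 (Or.inl ⟨ha.1, hb.1⟩)
  · exact lemD hirr hd.1 (Or.inl ⟨ha.1, hb.1⟩)
  · exact lemC hirr hc.1 (Or.inr (Or.inl ⟨ha.1, hd.1⟩))
  · exact lemC hirr hc.1 (Or.inr (Or.inr ⟨hb.1, hd.1⟩))

/-- From a private neighbour of `u` (when `v ∈ Z`). -/
lemma PNu (hirr : Irredundant (Gn n) Z) (hu : GVert.u ∈ Z) (hv : GVert.v ∈ Z) :
    ∃ i : Fin n, GVert.a i ∉ Z ∧ GVert.c i ∉ Z ∧ GVert.d i ∉ Z ∧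
      ∀ j, j ≠ i → GVert.b j ∉ Z := by
  obtain ⟨w, hdom, hpriv⟩ := hirr _ hu
  rcases dom_u (Or.imp_right SimpleGraph.Adj.symm hdom) with rfl | rfl | ⟨i, rfl⟩
  · exact absurd (Or.inr adj_uv.symm) (hpriv _ hv (by simp))
  · exact absurd (Or.inl rfl) (hpriv _ hv (by simp))
  · refine ⟨i, fun h => hpriv _ h (by simp) (Or.inl rfl),
      fun h => hpriv _ h (by simp) (Or.inr (adj_ac i).symm),
      fun h => hpriv _ h (by simp) (Or.inr (adj_da i)),
      fun j hj h => hpriv _ h (by simp) (Or.inr (adj_ab hj.symm).symm)⟩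

lemma PNv (hirr : Irredundant (Gn n) Z) (hu : GVert.u ∈ Z) (hv : GVert.v ∈ Z) :
    ∃ k : Fin n, GVert.b k ∉ Z ∧ GVert.c k ∉ Z ∧ GVert.d k ∉ Z ∧
      ∀ j, j ≠ k → GVert.a j ∉ Z := by
  obtain ⟨w, hdom, hpriv⟩ := hirr _ hv
  rcases dom_v (Or.imp_right SimpleGraph.Adj.symm hdom) with rfl | rfl | ⟨k, rfl⟩
  · exact absurd (Or.inr adj_uv) (hpriv _ hu (by simp))
  · exact absurd (Or.inl rfl) (hpriv _ hu (by simp))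
  · refine ⟨k, fun h => hpriv _ h (by simp) (Or.inl rfl),
      fun h => hpriv _ h (by simp) (Or.inr (adj_cb k)),
      fun h => hpriv _ h (by simp) (Or.inr (adj_bd k).symm),
      fun j hj h => hpriv _ h (by simp) (Or.inr (adj_ab hj))⟩

lemma subset_pair_ncard_le {α : Type*} {T : Set α} (x y : α) (h : T ⊆ {x, y}) :
    T.ncard ≤ 2 :=
  (Set.ncard_le_ncard h (Set.toFinite _)).trans
    ((Set.ncard_insert_le _ _).trans (by simp))

lemma subset_singleton_ncard_le {α : Type*} {T : Set α} (x : α) (h : T ⊆ {x}) :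
    T.ncard ≤ 1 :=
  (Set.ncard_le_ncard h (Set.toFinite _)).trans (by simp)

/-- If both `u` and `v` belong to an irredundant set, it has at most `2n` elements. -/
lemma uv_bound (hirr : Irredundant (Gn n) Z) (hu : GVert.u ∈ Z) (hv : GVert.v ∈ Z) :
    Z.ncard ≤ 2 * n := by
  classical
  obtain ⟨i, hai, hci, hdi, hbj⟩ := PNu hirr hu hv
  obtain ⟨k, hbk, hck, hdk, haj⟩ := PNv hirr hu hv
  have hcd : ∀ j : Fin n, j ≠ i → j ≠ k → (Z ∩ Sset n j).ncard ≤ 2 := by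
    intro j hji hjk
    refine subset_pair_ncard_le (GVert.c j) (GVert.d j) ?_
    rintro x ⟨hxZ, hxS⟩
    rcases hxS with rfl | rfl | rfl | rfl
    · exact absurd hxZ (haj j hjk)
    · exact absurd hxZ (hbj j hji)
    · exact Or.inl rfl
    · exact Or.inr rfl
  rw [card_decomp Z]
  by_cases hik : i = k
  · subst hik
    have hSi : (Z ∩ Sset n i).ncard = 0 := by
      rw [Set.ncard_eq_zero (Set.toFinite _)]
      ext x
      simp only [Set.mem_inter_iff, Set.mem_empty_iff_false, iff_false, not_and]
      rintro hxZ (rfl | rfl | rfl | rfl)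
      exacts [hai hxZ, hbk hxZ, hci hxZ, hdi hxZ]
    have hsplit : ∑ j : Fin n, (Z ∩ Sset n j).ncard
        = ∑ j ∈ Finset.univ.erase i, (Z ∩ Sset n j).ncard := by
      rw [← Finset.sum_erase_add _ _ (Finset.mem_univ i), hSi, add_zero]
    have hb : ∑ j ∈ Finset.univ.erase i, (Z ∩ Sset n j).ncard
        ≤ (Finset.univ.erase i).card * 2 := by
      rw [← smul_eq_mul]
      exact Finset.sum_le_card_nsmul _ _ 2 (fun j hj => by
        rcases Finset.mem_erase.mp hj with ⟨hji, _⟩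
        exact hcd j hji hji)
    have hcarde : (Finset.univ.erase i).card = n - 1 := by
      rw [Finset.card_erase_of_mem (Finset.mem_univ i)]
      simp
    have huv := ncard_inter_uv_le Z
    have hn1 : 1 ≤ n := i.pos
    omega
  · have hSi : (Z ∩ Sset n i).ncard ≤ 1 := by
      refine subset_singleton_ncard_le (GVert.b i) ?_
      rintro x ⟨hxZ, hxS⟩
      rcases hxS with rfl | rfl | rfl | rfl
      exacts [absurd hxZ hai, rfl, absurd hxZ hci, absurd hxZ hdi]
    have hSk : (Z ∩ Sset n k).ncard ≤ 1 := by
      refine subset_singleton_ncard_le (GVert.a k) ?_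
      rintro x ⟨hxZ, hxS⟩
      rcases hxS with rfl | rfl | rfl | rfl
      exacts [rfl, absurd hxZ hbk, absurd hxZ hck, absurd hxZ hdk]
    have hkmem : k ∈ Finset.univ.erase i := Finset.mem_erase.mpr ⟨Ne.symm hik, Finset.mem_univ k⟩
    have hsplit : ∑ j : Fin n, (Z ∩ Sset n j).ncard
        = ∑ j ∈ (Finset.univ.erase i).erase k, (Z ∩ Sset n j).ncard
          + (Z ∩ Sset n k).ncard + (Z ∩ Sset n i).ncard := by
      rw [← Finset.sum_erase_add _ _ (Finset.mem_univ i), ← Finset.sum_erase_add _ _ hkmem]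
    have hb : ∑ j ∈ (Finset.univ.erase i).erase k, (Z ∩ Sset n j).ncard
        ≤ ((Finset.univ.erase i).erase k).card * 2 := by
      rw [← smul_eq_mul]
      refine Finset.sum_le_card_nsmul _ _ 2 (fun j hj => ?_)
      rcases Finset.mem_erase.mp hj with ⟨hjk, hj'⟩
      rcases Finset.mem_erase.mp hj' with ⟨hji, _⟩
      exact hcd j hji hjk
    have hcarde : ((Finset.univ.erase i).erase k).card = n - 2 := by
      rw [Finset.card_erase_of_mem hkmem, Finset.card_erase_of_mem (Finset.mem_univ i)]
      simp only [Finset.card_univ, Fintype.card_fin]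
      omega
    have hn2 : 2 ≤ n := by
      have h1 := i.isLt
      have h2 := k.isLt
      have h3 : i.val ≠ k.val := fun h => hik (Fin.ext h)
      omega
    have huv := ncard_inter_uv_le Z
    omega

/-- Any irredundant set in `Gₙ` has at most `2n + 1` elements. -/
lemma irred_card_le (hirr : Irredundant (Gn n) Z) : Z.ncard ≤ 2 * n + 1 := by
  classical
  by_cases hu : GVert.u ∈ Z <;> by_cases hv : GVert.v ∈ Z
  · exact (uv_bound hirr hu hv).trans (by omega)
  all_goals {
    rw [card_decomp Z]
    have hA : (Z ∩ {GVert.u, GVert.v}).ncard ≤ 1 := by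
      first
      | exact subset_singleton_ncard_le (GVert.u)
          (by rintro x ⟨hxZ, rfl | rfl⟩; exacts [rfl, absurd hxZ hv])
      | exact subset_singleton_ncard_le (GVert.v)
          (by rintro x ⟨hxZ, rfl | rfl⟩; exacts [absurd hxZ hu, rfl])
    have hS : ∑ i : Fin n, (Z ∩ Sset n i).ncard ≤ n * 2 := by
      have := Finset.sum_le_card_nsmul Finset.univ (fun i => (Z ∩ Sset n i).ncard) 2
        (fun i _ => irred_S_le_two hirr i)
      simpa using this
    omega }

/-- The canonical irredundant set of size `2n + 1`. -/
def D0 (n : ℕ) : Set (GVert n) := {GVert.u} ∪ {x | ∃ i, x = GVert.c i ∨ x = GVert.d i}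

lemma D0_card : (D0 n).ncard = 2 * n + 1 := by
  rw [card_decomp (D0 n)]
  have h1 : (D0 n ∩ {GVert.u, GVert.v}) = {GVert.u} := by
    ext x
    cases x <;> simp [D0]
  have h2 : ∀ i : Fin n, (D0 n ∩ Sset n i) = {GVert.c i, GVert.d i} := by
    intro i
    ext x
    cases x <;> simp [D0, Sset] <;> rintro rfl <;> simp
  rw [h1, Set.ncard_singleton]
  have : ∀ i : Fin n, (D0 n ∩ Sset n i).ncard = 2 := by
    intro i
    rw [h2 i, Set.ncard_pair (by simp)]
  rw [Finset.sum_congr rfl (fun i _ => this i)]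
  simp only [Finset.sum_const, Finset.card_univ, Fintype.card_fin, smul_eq_mul]
  omega

lemma D0_mem_cases {x : GVert n} (h : x ∈ D0 n) :
    x = GVert.u ∨ ∃ i, x = GVert.c i ∨ x = GVert.d i := by
  rcases h with h | h
  · exact Or.inl h
  · exact Or.inr h

lemma D0_indep {x y : GVert n} (hx : x ∈ D0 n) (hy : y ∈ D0 n) : ¬ (Gn n).Adj x y := by
  rcases D0_mem_cases hx with rfl | ⟨i, rfl | rfl⟩ <;>
    rcases D0_mem_cases hy with rfl | ⟨j, rfl | rfl⟩ <;> simp [Gn]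

lemma D0_irred : Irredundant (Gn n) (D0 n) := by
  intro z hz
  refine ⟨z, Or.inl rfl, fun y hy hyz h => ?_⟩
  rcases h with rfl | h
  · exact hyz rfl
  · exact D0_indep hy hz h

lemma IRnum_Gn : IRnum (Gn n) = 2 * n + 1 := by
  have hmem : 2 * n + 1 ∈ {m | ∃ D : Set (GVert n), Irredundant (Gn n) D ∧ D.ncard = m} :=
    ⟨D0 n, D0_irred, D0_card⟩
  apply le_antisymm
  · refine csSup_le ⟨_, hmem⟩ ?_
    rintro m ⟨D, hD, rfl⟩
    exact irred_card_le hD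
  · refine le_csSup ⟨2 * n + 1, ?_⟩ hmem
    rintro m ⟨D, hD, rfl⟩
    exact irred_card_le hD

end Aux

/-- For every `n ≥ 1`, every `IR(Gₙ)`-set contains exactly one of `u` and `v`,
and exactly two vertices from each `Sᵢ`. -/
theorem statement7 (n : ℕ) (hn : 1 ≤ n) (Z : Set (GVert n))
    (hZ : IsIRSet (Gn n) Z) :
    ((GVert.u ∈ Z ∧ GVert.v ∉ Z) ∨ (GVert.u ∉ Z ∧ GVert.v ∈ Z)) ∧
      ∀ i : Fin n, (Z ∩ Sset n i).ncard = 2 := by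
  classical
  obtain ⟨hirr, hcard⟩ := hZ
  rw [IRnum_Gn] at hcard
  have hnotboth : ¬ (GVert.u ∈ Z ∧ GVert.v ∈ Z) := by
    rintro ⟨hu, hv⟩
    have := uv_bound hirr hu hv
    omega
  have hdec := card_decomp Z
  have hS : ∑ i : Fin n, (Z ∩ Sset n i).ncard ≤ n * 2 := by
    have := Finset.sum_le_card_nsmul Finset.univ (fun i => (Z ∩ Sset n i).ncard) 2
      (fun i _ => irred_S_le_two hirr i)
    simpa using this
  have hone : GVert.u ∈ Z ∨ GVert.v ∈ Z := by
    by_contra h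
    push_neg at h
    have hA : (Z ∩ {GVert.u, GVert.v}).ncard = 0 := by
      rw [Set.ncard_eq_zero (Set.toFinite _)]
      ext x
      simp only [Set.mem_inter_iff, Set.mem_empty_iff_false, iff_false, not_and]
      rintro hxZ (rfl | rfl)
      exacts [h.1 hxZ, h.2 hxZ]
    omega
  have hA1 : (Z ∩ {GVert.u, GVert.v}).ncard ≤ 1 := by
    rcases hone with hu | hv
    · have hv : GVert.v ∉ Z := fun hv => hnotboth ⟨hu, hv⟩
      exact subset_singleton_ncard_le (GVert.u)
        (by rintro x ⟨hxZ, rfl | rfl⟩; exacts [rfl, absurd hxZ hv])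
    · have hu : GVert.u ∉ Z := fun hu => hnotboth ⟨hu, hv⟩
      exact subset_singleton_ncard_le (GVert.v)
        (by rintro x ⟨hxZ, rfl | rfl⟩; exacts [absurd hxZ hu, rfl])
  have hSsum : ∑ i : Fin n, (Z ∩ Sset n i).ncard = n * 2 := by omega
  constructor
  · rcases hone with hu | hv
    · exact Or.inl ⟨hu, fun hv => hnotboth ⟨hu, hv⟩⟩
    · exact Or.inr ⟨fun hu => hnotboth ⟨hu, hv⟩, hv⟩
  · intro i
    by_contra hne
    have hlt : (Z ∩ Sset n i).ncard < 2 :=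
      lt_of_le_of_ne (irred_S_le_two hirr i) hne
    have : ∑ j : Fin n, (Z ∩ Sset n j).ncard < ∑ _j : Fin n, 2 := by
      refine Finset.sum_lt_sum (fun j _ => irred_S_le_two hirr j) ⟨i, Finset.mem_univ i, hlt⟩
    simp only [Finset.sum_const, Finset.card_univ, Fintype.card_fin, smul_eq_mul] at this
    omega
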